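/- arXiv:1409.5133 — 6 statements merged into one kernel-verified Lean document; each statement's English description precedes it below -/
import Mathlib

section
/- Let A, B, C, D be bounded operators forming a 2×2 block operator 𝔸 on X₁ × X₂. If λ ∈ ℂ is such that λ - A and λ - D are invertible and ‖B(λ-D)⁻¹C(λ-A)⁻¹‖ < 1, then λ - 𝔸 is invertible. Equivalently, the spectrum of 𝔸 is contained in σ(A) ∪ σ(D) ∪ { λ ∉ σ(A)∪σ(D) : ‖B(λ-D)⁻¹C(λ-A)⁻¹‖ ≥ 1 }. -/
open ContinuousLinearMap

section BlkAux

variable {X₁ X₂ : Type*} [NormedAddCommGroup X₁] [NormedSpace ℂ X₁]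
  [NormedAddCommGroup X₂] [NormedSpace ℂ X₂]

/-- 2×2 block operator on `X₁ × X₂`. -/
noncomputable def myBlk (P : X₁ →L[ℂ] X₁) (Q : X₂ →L[ℂ] X₁) (R : X₁ →L[ℂ] X₂)
    (T : X₂ →L[ℂ] X₂) : (X₁ × X₂) →L[ℂ] (X₁ × X₂) :=
  (P ∘L fst ℂ X₁ X₂ + Q ∘L snd ℂ X₁ X₂).prod (R ∘L fst ℂ X₁ X₂ + T ∘L snd ℂ X₁ X₂)

@[simp] lemma myBlk_apply (P : X₁ →L[ℂ] X₁) (Q : X₂ →L[ℂ] X₁) (R : X₁ →L[ℂ] X₂)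
    (T : X₂ →L[ℂ] X₂) (x : X₁) (y : X₂) :
    myBlk P Q R T (x, y) = (P x + Q y, R x + T y) := by
  simp [myBlk]

/-- A block-diagonal operator with invertible diagonal blocks is invertible. -/
lemma myBlk_diag_isUnit {P : X₁ →L[ℂ] X₁} {T : X₂ →L[ℂ] X₂}
    (hP : IsUnit P) (hT : IsUnit T) : IsUnit (myBlk P 0 0 T) := by
  obtain ⟨uP, rfl⟩ := hP
  obtain ⟨uT, rfl⟩ := hT
  have h1 : ∀ x, (↑uP * ↑uP⁻¹ : X₁ →L[ℂ] X₁) x = x := by rw [uP.mul_inv]; intro x; rfl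
  have h2 : ∀ x, (↑uP⁻¹ * ↑uP : X₁ →L[ℂ] X₁) x = x := by rw [uP.inv_mul]; intro x; rfl
  have h3 : ∀ y, (↑uT * ↑uT⁻¹ : X₂ →L[ℂ] X₂) y = y := by rw [uT.mul_inv]; intro y; rfl
  have h4 : ∀ y, (↑uT⁻¹ * ↑uT : X₂ →L[ℂ] X₂) y = y := by rw [uT.inv_mul]; intro y; rfl
  simp only [ContinuousLinearMap.mul_apply] at h1 h2 h3 h4
  refine ⟨⟨myBlk (↑uP) 0 0 (↑uT), myBlk (↑uP⁻¹) 0 0 (↑uT⁻¹), ?_, ?_⟩, rfl⟩ <;>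
  · apply ContinuousLinearMap.ext
    rintro ⟨x, y⟩
    simp [ContinuousLinearMap.mul_apply, h1, h2, h3, h4]

/-- An upper unitriangular block operator is invertible. -/
lemma myBlk_upper_isUnit (Q : X₂ →L[ℂ] X₁) :
    IsUnit (myBlk (1 : X₁ →L[ℂ] X₁) Q 0 (1 : X₂ →L[ℂ] X₂)) := by
  refine ⟨⟨myBlk 1 Q 0 1, myBlk 1 (-Q) 0 1, ?_, ?_⟩, rfl⟩ <;>
  · apply ContinuousLinearMap.ext
    rintro ⟨x, y⟩
    simp only [ContinuousLinearMap.mul_apply, myBlk_apply,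
      ContinuousLinearMap.one_apply, ContinuousLinearMap.zero_apply,
      ContinuousLinearMap.neg_apply, zero_add, add_zero]
    simp only [Prod.mk.injEq]
    exact ⟨by abel, trivial⟩

/-- A lower unitriangular block operator is invertible. -/
lemma myBlk_lower_isUnit (R : X₁ →L[ℂ] X₂) :
    IsUnit (myBlk (1 : X₁ →L[ℂ] X₁) 0 R (1 : X₂ →L[ℂ] X₂)) := by
  refine ⟨⟨myBlk 1 0 R 1, myBlk 1 0 (-R) 1, ?_, ?_⟩, rfl⟩ <;>
  · apply ContinuousLinearMap.ext
    rintro ⟨x, y⟩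
    simp only [ContinuousLinearMap.mul_apply, myBlk_apply,
      ContinuousLinearMap.one_apply, ContinuousLinearMap.zero_apply,
      ContinuousLinearMap.neg_apply, zero_add, add_zero]
    simp only [Prod.mk.injEq]
    exact ⟨trivial, by abel⟩

end BlkAux

/-- Theorem 1.1 (the 2×2 case, bounded entries): if `λ - A` and `λ - D` are
invertible and `‖B (λ-D)⁻¹ C (λ-A)⁻¹‖ < 1`, then `λ - 𝔸` is invertible; i.e.
the spectrum of `𝔸` lies in the Schur set `S₂₁(𝔸)`. -/
theorem two_by_two_schur_set_localization
    {X₁ X₂ : Type*} [NormedAddCommGroup X₁] [NormedSpace ℂ X₁] [CompleteSpace X₁]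
    [NormedAddCommGroup X₂] [NormedSpace ℂ X₂] [CompleteSpace X₂]
    (A : X₁ →L[ℂ] X₁) (B : X₂ →L[ℂ] X₁) (C : X₁ →L[ℂ] X₂) (D : X₂ →L[ℂ] X₂)
    (𝔸 : (X₁ × X₂) →L[ℂ] (X₁ × X₂))
    (h𝔸 : ∀ x y, 𝔸 (x, y) = (A x + B y, C x + D y))
    (lam : ℂ)
    (A' : X₁ →L[ℂ] X₁)
    (hA1 : (lam • (1 : X₁ →L[ℂ] X₁) - A) ∘L A' = 1)
    (hA2 : A' ∘L (lam • (1 : X₁ →L[ℂ] X₁) - A) = 1)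
    (D' : X₂ →L[ℂ] X₂)
    (hD1 : (lam • (1 : X₂ →L[ℂ] X₂) - D) ∘L D' = 1)
    (hD2 : D' ∘L (lam • (1 : X₂ →L[ℂ] X₂) - D) = 1)
    (hnorm : ‖B ∘L D' ∘L C ∘L A'‖ < 1) :
    IsUnit (lam • (1 : (X₁ × X₂) →L[ℂ] (X₁ × X₂)) - 𝔸) := by
  set a : X₁ →L[ℂ] X₁ := lam • (1 : X₁ →L[ℂ] X₁) - A with ha_def
  set d : X₂ →L[ℂ] X₂ := lam • (1 : X₂ →L[ℂ] X₂) - D with hd_def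
  -- pointwise versions of the inverse identities
  have pa2 : ∀ x, A' (a x) = x := fun x => by
    have := DFunLike.congr_fun hA2 x
    simpa using this
  have pd1 : ∀ y, d (D' y) = y := fun y => by
    have := DFunLike.congr_fun hD1 y
    simpa using this
  have pd2 : ∀ y, D' (d y) = y := fun y => by
    have := DFunLike.congr_fun hD2 y
    simpa using this
  -- hypotheses in `mul` form
  have ha1 : a * A' = 1 := hA1
  have ha2 : A' * a = 1 := hA2
  have hd1 : d * D' = 1 := hD1
  have hd2 : D' * d = 1 := hD2
  -- the small perturbation and its invertibility
  set t : X₁ →L[ℂ] X₁ := B ∘L D' ∘L C ∘L A' with ht_def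
  have hE : IsUnit (1 - t) := (Units.oneSub t hnorm).isUnit
  -- Schur complement
  set S : X₁ →L[ℂ] X₁ := a - B ∘L (D' ∘L C) with hS_def
  have hSa : S = (1 - t) * a := by
    apply ContinuousLinearMap.ext
    intro x
    simp [hS_def, ht_def, ContinuousLinearMap.mul_apply,
      ContinuousLinearMap.sub_apply, pa2]
  have hSunit : IsUnit S := by
    rw [hSa]; exact hE.mul ⟨⟨a, A', ha1, ha2⟩, rfl⟩
  have hdunit : IsUnit d := ⟨⟨d, D', hd1, hd2⟩, rfl⟩
  -- factorization  λ - 𝔸 = T₁ * Dg * T₂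
  have hL : lam • (1 : (X₁ × X₂) →L[ℂ] (X₁ × X₂)) - 𝔸 = myBlk a (-B) (-C) d := by
    apply ContinuousLinearMap.ext
    rintro ⟨x, y⟩
    simp only [ContinuousLinearMap.sub_apply, ContinuousLinearMap.smul_apply,
      ContinuousLinearMap.one_apply, h𝔸, myBlk_apply, Prod.smul_mk, Prod.mk_sub_mk,
      ContinuousLinearMap.neg_apply, ha_def, hd_def, ContinuousLinearMap.sub_apply,
      Prod.mk.injEq]
    constructor <;> abel
  have hfact : myBlk a (-B) (-C) d =
      myBlk (1 : X₁ →L[ℂ] X₁) (-(B ∘L D')) 0 (1 : X₂ →L[ℂ] X₂) *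
        (myBlk S 0 0 d *
          myBlk (1 : X₁ →L[ℂ] X₁) 0 (-(D' ∘L C)) (1 : X₂ →L[ℂ] X₂)) := by
    apply ContinuousLinearMap.ext
    rintro ⟨x, y⟩
    simp only [ContinuousLinearMap.mul_apply, myBlk_apply,
      ContinuousLinearMap.one_apply, ContinuousLinearMap.zero_apply,
      ContinuousLinearMap.neg_apply, ContinuousLinearMap.coe_comp', Function.comp_apply,
      zero_add, add_zero, hS_def, ContinuousLinearMap.sub_apply, map_add, map_neg,
      map_sub, pd1, pd2, Prod.mk.injEq]
    constructor <;> abel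
  rw [hL, hfact]
  exact (myBlk_upper_isUnit _).mul ((myBlk_diag_isUnit hSunit hdunit).mul
    (myBlk_lower_isUnit _))
end

section
/- Every eigenvalue λ of a complex n×n matrix A (with n ≥ 2) lies in the union of the Cassini ovals: there exist distinct indices i, j such that |λ - A i i| · |λ - A j j| ≤ (Σ_{l ≠ i} |A l i|) · (Σ_{l ≠ j} |A l j|). -/
open Finset Matrix

/-- Brauer–Ostrowski Cassini ovals theorem, column version: every eigenvalue of an
`n × n` complex matrix (`n ≥ 2`) lies in some Cassini oval. -/
theorem cassini_ovals {n : ℕ} (hn : 2 ≤ n) (A : Matrix (Fin n) (Fin n) ℂ) (lam : ℂ)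
    (h : ∃ x : Fin n → ℂ, x ≠ 0 ∧ A.mulVec x = lam • x) :
    ∃ i j : Fin n, i ≠ j ∧
      ‖lam - A i i‖ * ‖lam - A j j‖ ≤
        (∑ l ∈ Finset.univ.erase i, ‖A l i‖) *
        (∑ l ∈ Finset.univ.erase j, ‖A l j‖) := by
  classical
  obtain ⟨x, hx0, hx⟩ := h
  -- the characteristic determinant vanishes
  have hdet : (A - lam • (1 : Matrix (Fin n) (Fin n) ℂ)).det = 0 := by
    rw [← Matrix.exists_mulVec_eq_zero_iff]
    exact ⟨x, hx0, by
      rw [Matrix.sub_mulVec, hx, Matrix.smul_mulVec, Matrix.one_mulVec, sub_self]⟩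
  have hdetT : (Aᵀ - lam • (1 : Matrix (Fin n) (Fin n) ℂ)).det = 0 := by
    have : Aᵀ - lam • (1 : Matrix (Fin n) (Fin n) ℂ) = (A - lam • 1)ᵀ := by
      rw [Matrix.transpose_sub, Matrix.transpose_smul, Matrix.transpose_one]
    rw [this, Matrix.det_transpose]
    exact hdet
  obtain ⟨y, hy0, hy⟩ := Matrix.exists_mulVec_eq_zero_iff.mpr hdetT
  set B := Aᵀ with hB
  -- row equations for B
  have hrow : ∀ i, (lam - B i i) * y i = ∑ l ∈ univ.erase i, B i l * y l := by
    intro i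
    have h1 := congrFun hy i
    simp only [Matrix.mulVec, dotProduct, Matrix.sub_apply, Matrix.smul_apply,
      Matrix.one_apply, Pi.zero_apply, smul_eq_mul] at h1
    have h4 : (∑ l : Fin n, (lam * if i = l then 1 else 0) * y l) = lam * y i := by
      simp [ite_mul, mul_ite, Finset.sum_ite_eq]
    have h2 : ∑ l : Fin n, (B i l - lam * if i = l then 1 else 0) * y l =
        (∑ l, B i l * y l) - (∑ l : Fin n, (lam * if i = l then 1 else 0) * y l) := by
      rw [← Finset.sum_sub_distrib]
      apply Finset.sum_congr rfl
      intro l _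
      ring
    have h3 : (∑ l, B i l * y l) = lam * y i := by
      rw [h2, h4] at h1
      linear_combination h1
    have h4 : (∑ l, B i l * y l) = B i i * y i + ∑ l ∈ univ.erase i, B i l * y l := by
      rw [← Finset.add_sum_erase _ _ (Finset.mem_univ i)]
    rw [sub_mul, ← h3, h4]
    ring
  -- pick index of maximal modulus
  obtain ⟨i, -, hi⟩ := Finset.exists_max_image (univ : Finset (Fin n))
    (fun l => ‖y l‖) ⟨⟨0, by omega⟩, Finset.mem_univ _⟩
  have hine : (univ.erase i).Nonempty := by
    rw [← Finset.card_pos, Finset.card_erase_of_mem (Finset.mem_univ i), Finset.card_univ,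
      Fintype.card_fin]
    omega
  obtain ⟨j, hjmem, hj⟩ := Finset.exists_max_image (univ.erase i)
    (fun l => ‖y l‖) hine
  have hji : j ≠ i := (Finset.mem_erase.mp hjmem).1
  have hyi : ‖y i‖ ≠ 0 := by
    intro h0
    apply hy0
    funext k
    have := hi k (Finset.mem_univ k)
    simp only [h0] at this
    exact norm_eq_zero.mp (le_antisymm this (norm_nonneg _))
  refine ⟨i, j, hji.symm, ?_⟩
  have hBA : ∀ k l : Fin n, B k l = A l k := fun k l => rfl
  have hBd : ∀ k : Fin n, B k k = A k k := fun k => rfl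
  -- two key inequalities
  have key : ∀ k : Fin n, ∀ c : ℝ, 0 ≤ c → (∀ l ∈ univ.erase k, ‖y l‖ ≤ c) →
      ‖lam - B k k‖ * ‖y k‖ ≤
        (∑ l ∈ univ.erase k, ‖B k l‖) * c := by
    intro k c hc0 hc
    calc ‖lam - B k k‖ * ‖y k‖
        = ‖∑ l ∈ univ.erase k, B k l * y l‖ := by
          rw [← norm_mul, hrow k]
      _ ≤ ∑ l ∈ univ.erase k, ‖B k l * y l‖ :=
          norm_sum_le _ _
      _ = ∑ l ∈ univ.erase k, ‖B k l‖ * ‖y l‖ := by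
          simp [norm_mul]
      _ ≤ ∑ l ∈ univ.erase k, ‖B k l‖ * c := by
          apply Finset.sum_le_sum
          intro l hl
          exact mul_le_mul_of_nonneg_left (hc l hl) (norm_nonneg _)
      _ = (∑ l ∈ univ.erase k, ‖B k l‖) * c := by
          rw [Finset.sum_mul]
  have key_i : ‖lam - B i i‖ * ‖y i‖ ≤
      (∑ l ∈ univ.erase i, ‖B i l‖) * ‖y j‖ :=
    key i _ (norm_nonneg _) (fun l hl => hj l hl)
  have key_j : ‖lam - B j j‖ * ‖y j‖ ≤
      (∑ l ∈ univ.erase j, ‖B j l‖) * ‖y i‖ :=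
    key j _ (norm_nonneg _) (fun l _ => hi l (Finset.mem_univ l))
  have hsum_eq : ∀ k : Fin n, (∑ l ∈ univ.erase k, ‖B k l‖) =
      ∑ l ∈ univ.erase k, ‖A l k‖ := by
    intro k; rfl
  rw [← hsum_eq, ← hsum_eq, ← hBd i, ← hBd j]
  rcases eq_or_lt_of_le (norm_nonneg (y j)) with hyj | hyj
  · -- y j = 0, hence y l = 0 for l ≠ i, so lam = B i i
    have hzero : ∀ l ∈ univ.erase i, y l = 0 := by
      intro l hl
      have := hj l hl
      rw [← hyj] at this
      exact norm_eq_zero.mp (le_antisymm this (norm_nonneg _))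
    have : (lam - B i i) * y i = 0 := by
      rw [hrow i]
      exact Finset.sum_eq_zero fun l hl => by rw [hzero l hl, mul_zero]
    have hlam : lam - B i i = 0 := by
      rcases mul_eq_zero.mp this with h | h
      · exact h
      · exact absurd (by rw [h, norm_zero]) hyi
    rw [hlam, norm_zero, zero_mul]
    exact mul_nonneg (Finset.sum_nonneg fun _ _ => norm_nonneg _)
      (Finset.sum_nonneg fun _ _ => norm_nonneg _)
  · -- y j ≠ 0, multiply inequalities and divide
    have hyip : 0 < ‖y i‖ := lt_of_lt_of_le hyj (hi j (Finset.mem_univ j))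
    have hmul := mul_le_mul key_i key_j
      (mul_nonneg (norm_nonneg _) (norm_nonneg _))
      (mul_nonneg (Finset.sum_nonneg fun _ _ => norm_nonneg _) (norm_nonneg _))
    have hpos : 0 < ‖y i‖ * ‖y j‖ := mul_pos hyip hyj
    have hfin : (‖lam - B i i‖ * ‖lam - B j j‖) *
        (‖y i‖ * ‖y j‖) ≤
        ((∑ l ∈ univ.erase i, ‖B i l‖) *
          (∑ l ∈ univ.erase j, ‖B j l‖)) *
        (‖y i‖ * ‖y j‖) := by nlinarith [hmul]
    exact le_of_mul_le_mul_right hfin hpos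
end

section
/- Let A be an n×n complex matrix and λ ∈ ℂ with λ ≠ A j j for all j. If for some fixed index k (with λ ≠ A k k) it holds for every j ≠ k that Σ_{i ≠ k} |A i k · A k j + (if i ≠ j then (λ - A k k)·A i j else 0)| < |λ - A j j| · |λ - A k k|, then λ is not an eigenvalue of A. -/
open Finset

/-- Scalar form of the Schur-set spectral exclusion: if `λ` avoids all diagonal
entries and the Schur-set inequalities hold strictly for some pivot `k`,
then `λ` is not an eigenvalue of `A`. -/
theorem schur_set_exclusion {n : ℕ} (A : Matrix (Fin n) (Fin n) ℂ) (lam : ℂ)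
    (hdiag : ∀ j, lam ≠ A j j) (k : Fin n)
    (hk : ∀ j, j ≠ k →
      ∑ i ∈ Finset.univ.erase k,
          ‖A i k * A k j + (if i ≠ j then (lam - A k k) * A i j else 0)‖ <
        ‖lam - A j j‖ * ‖lam - A k k‖) :
    ¬ ∃ x : Fin n → ℂ, x ≠ 0 ∧ A.mulVec x = lam • x := by
  rintro ⟨x, hx, hAx⟩
  -- `lam` is an eigenvalue of `A`, hence of `Aᵀ`; get a transpose eigenvector `y`.
  have hdet : (lam • (1 : Matrix (Fin n) (Fin n) ℂ) - A).det = 0 := by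
    rw [← Matrix.exists_mulVec_eq_zero_iff]
    refine ⟨x, hx, ?_⟩
    rw [Matrix.sub_mulVec, Matrix.smul_mulVec, Matrix.one_mulVec, hAx, sub_self]
  have hdetT : ((lam • (1 : Matrix (Fin n) (Fin n) ℂ) - A).transpose).det = 0 := by
    rw [Matrix.det_transpose]; exact hdet
  obtain ⟨y, hy0, hy⟩ := (Matrix.exists_mulVec_eq_zero_iff).2 hdetT
  have hsum : ∀ j, ∑ i, A i j * y i = lam * y j := by
    intro j
    have h := congrFun hy j
    simp only [Matrix.mulVec, dotProduct, Matrix.transpose_apply, Matrix.sub_apply,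
      Matrix.smul_apply, Matrix.one_apply, smul_eq_mul, Pi.zero_apply, sub_mul, mul_ite,
      mul_one, mul_zero, ite_mul, zero_mul, Finset.sum_sub_distrib, Finset.sum_ite_eq',
      Finset.mem_univ, if_true, sub_eq_zero] at h
    exact h.symm
  have hrow : ∀ j, (lam - A j j) * y j = ∑ i ∈ univ.erase j, A i j * y i := by
    intro j
    have h : ∑ i ∈ univ.erase j, A i j * y i + A j j * y j = lam * y j := by
      rw [Finset.sum_erase_add univ _ (Finset.mem_univ j)]; exact hsum j
    linear_combination -h
  set c : ℂ := lam - A k k with hc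
  have key : ∀ j, j ≠ k →
      ∑ i ∈ univ.erase k,
          (A i k * A k j + (if i ≠ j then c * A i j else 0)) * y i
        = c * ((lam - A j j) * y j) := by
    intro j hj
    have e1 : ∑ i ∈ univ.erase k, (A i k * A k j + (if i ≠ j then c * A i j else 0)) * y i
        = A k j * ∑ i ∈ univ.erase k, A i k * y i
          + ∑ i ∈ univ.erase k, (if i ≠ j then c * A i j else 0) * y i := by
      rw [Finset.mul_sum, ← Finset.sum_add_distrib]
      exact Finset.sum_congr rfl fun i _ => by ring
    have e2' : ∑ i ∈ (univ.erase k).erase j, (if i ≠ j then c * A i j else 0) * y i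
        = ∑ i ∈ univ.erase k, (if i ≠ j then c * A i j else 0) * y i :=
      Finset.sum_erase _ (by simp)
    have e2 : ∑ i ∈ univ.erase k, (if i ≠ j then c * A i j else 0) * y i
        = ∑ i ∈ (univ.erase k).erase j, c * (A i j * y i) := by
      rw [← e2']
      refine Finset.sum_congr rfl fun i hi => ?_
      rw [if_pos (Finset.mem_erase.1 hi).1]; ring
    have e3 : (lam - A j j) * y j = A k j * y k + ∑ i ∈ (univ.erase j).erase k, A i j * y i := by
      rw [hrow j]
      exact (Finset.add_sum_erase _ _ (Finset.mem_erase.2 ⟨Ne.symm hj, Finset.mem_univ k⟩)).symm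
    have e4 : (univ.erase j).erase k = (univ.erase k).erase j := Finset.erase_right_comm
    rw [e1, e2, ← hrow k, e3, e4, mul_add]
    congr 1
    · rw [hc]; ring
    · rw [Finset.mul_sum]
  -- Case split: either `y` vanishes off `k`, or pick a maximal component off `k`.
  by_cases hz : ∀ j ∈ univ.erase k, y j = 0
  · -- then `y = y k • e k` and `lam = A k k`, contradiction.
    have hyk : y k ≠ 0 := by
      intro h0
      apply hy0
      funext i
      by_cases hik : i = k
      · rw [hik, h0]; rfl
      · exact hz i (Finset.mem_erase.2 ⟨hik, Finset.mem_univ i⟩)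
    have h := hrow k
    rw [Finset.sum_eq_zero (fun i hi => by rw [hz i hi, mul_zero])] at h
    rcases mul_eq_zero.1 h with h1 | h1
    · exact hdiag k (sub_eq_zero.1 h1)
    · exact hyk h1
  · push_neg at hz
    obtain ⟨j1, hj1mem, hj1⟩ := hz
    obtain ⟨j₀, hj₀mem, hj₀max⟩ :=
      Finset.exists_max_image (univ.erase k) (fun i => ‖y i‖) ⟨j1, hj1mem⟩
    have hj₀k : j₀ ≠ k := Finset.ne_of_mem_erase hj₀mem
    have hpos : 0 < ‖y j₀‖ :=
      lt_of_lt_of_le (by simpa using hj1) (hj₀max j1 hj1mem)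
    have hfin : ‖lam - A j₀ j₀‖ * ‖c‖ * ‖y j₀‖ <
        ‖lam - A j₀ j₀‖ * ‖c‖ * ‖y j₀‖ := by
      calc ‖lam - A j₀ j₀‖ * ‖c‖ * ‖y j₀‖
          = ‖c * ((lam - A j₀ j₀) * y j₀)‖ := by
            rw [norm_mul, norm_mul]; ring
        _ = ‖∑ i ∈ univ.erase k,
              (A i k * A k j₀ + (if i ≠ j₀ then c * A i j₀ else 0)) * y i‖ := by
            rw [key j₀ hj₀k]
        _ ≤ ∑ i ∈ univ.erase k,
              ‖(A i k * A k j₀ + (if i ≠ j₀ then c * A i j₀ else 0)) * y i‖ :=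
            norm_sum_le _ _
        _ = ∑ i ∈ univ.erase k,
              ‖A i k * A k j₀ + (if i ≠ j₀ then c * A i j₀ else 0)‖ *
                ‖y i‖ := by
            exact Finset.sum_congr rfl fun i _ => norm_mul _ _
        _ ≤ ∑ i ∈ univ.erase k,
              ‖A i k * A k j₀ + (if i ≠ j₀ then c * A i j₀ else 0)‖ *
                ‖y j₀‖ :=
            Finset.sum_le_sum fun i hi =>
              mul_le_mul_of_nonneg_left (hj₀max i hi) (norm_nonneg _)
        _ = (∑ i ∈ univ.erase k,
              ‖A i k * A k j₀ + (if i ≠ j₀ then c * A i j₀ else 0)‖) *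
                ‖y j₀‖ := by rw [Finset.sum_mul]
        _ < ‖lam - A j₀ j₀‖ * ‖c‖ * ‖y j₀‖ :=
            mul_lt_mul_of_pos_right (hk j₀ hj₀k) hpos
    exact lt_irrefl _ hfin
end

section
/- Let A be an n×n complex matrix and λ ∈ ℂ with λ ≠ A i i for all i. If λ lies outside every Cassini oval, i.e. for all distinct i, j one has (Σ_{l≠i}|A l i|)·(Σ_{l≠j}|A l j|) < |λ - A i i|·|λ - A j j|, then λ lies outside some Schur set S_k(A): there exists an index k such that for every j ≠ k, Σ_{i ≠ k} |A i k · A k j + (if i ≠ j then (λ - A k k)·A i j else 0)| < |λ - A j j|·|λ - A k k|. -/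
/-- If `λ` lies strictly outside every Cassini oval, then it lies outside some
Schur set `S_k(A)`. -/
theorem schur_sets_in_cassini {n : ℕ} (hn : 2 ≤ n)
    (A : Matrix (Fin n) (Fin n) ℂ) (lam : ℂ) (hdiag : ∀ i, lam ≠ A i i)
    (h : ∀ i j : Fin n, i ≠ j →
      (∑ l ∈ Finset.univ.erase i, ‖A l i‖) *
      (∑ l ∈ Finset.univ.erase j, ‖A l j‖) <
        ‖lam - A i i‖ * ‖lam - A j j‖) :
    ∃ k : Fin n, ∀ j, j ≠ k →
      ∑ i ∈ Finset.univ.erase k,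
          ‖A i k * A k j + (if i ≠ j then (lam - A k k) * A i j else 0)‖ <
        ‖lam - A j j‖ * ‖lam - A k k‖ := by
  set r : Fin n → ℝ := fun i => ∑ l ∈ Finset.univ.erase i, ‖A l i‖ with hrdef
  set d : Fin n → ℝ := fun i => ‖lam - A i i‖ with hddef
  have hd : ∀ i, 0 < d i := fun i => norm_pos_iff.mpr (sub_ne_zero.mpr (hdiag i))
  have hr0 : ∀ i, 0 ≤ r i := fun i => Finset.sum_nonneg fun _ _ => norm_nonneg _
  have hAle : ∀ k j : Fin n, j ≠ k → ‖A k j‖ ≤ r j := by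
    intro k j hjk
    exact Finset.single_le_sum (f := fun l => ‖A l j‖)
      (fun _ _ => norm_nonneg _)
      (Finset.mem_erase.mpr ⟨fun hkj => hjk hkj.symm, Finset.mem_univ _⟩)
  have key : ∀ k j : Fin n, j ≠ k →
      (∑ i ∈ Finset.univ.erase k,
        ‖A i k * A k j + (if i ≠ j then (lam - A k k) * A i j else 0)‖)
      ≤ r k * ‖A k j‖ + d k * (r j - ‖A k j‖) := by
    intro k j hjk
    have hstep : (∑ i ∈ Finset.univ.erase k,
        ‖A i k * A k j + (if i ≠ j then (lam - A k k) * A i j else 0)‖)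
        ≤ ∑ i ∈ Finset.univ.erase k,
          (‖A i k‖ * ‖A k j‖
            + (if i ≠ j then d k * ‖A i j‖ else 0)) := by
      refine Finset.sum_le_sum fun i _ => ?_
      refine (norm_add_le _ _).trans ?_
      by_cases hij : i ≠ j <;> simp [hij, map_mul, hddef]
    refine hstep.trans ?_
    rw [Finset.sum_add_distrib, ← Finset.sum_mul]
    have hsum2 : (∑ i ∈ Finset.univ.erase k,
        (if i ≠ j then d k * ‖A i j‖ else 0))
        = d k * (r j - ‖A k j‖) := by
      have hj : j ∈ Finset.univ.erase k :=
        Finset.mem_erase.mpr ⟨hjk, Finset.mem_univ _⟩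
      rw [← Finset.sum_erase (s := Finset.univ.erase k) (a := j)
        (f := fun i => if i ≠ j then d k * ‖A i j‖ else 0) (by simp)]
      have : ∀ i ∈ (Finset.univ.erase k).erase j,
          (if i ≠ j then d k * ‖A i j‖ else 0) = d k * ‖A i j‖ := by
        intro i hi
        simp [(Finset.mem_erase.mp hi).1]
      rw [Finset.sum_congr rfl this, ← Finset.mul_sum]
      congr 1
      rw [Finset.erase_right_comm]
      have hk : k ∈ Finset.univ.erase j :=
        Finset.mem_erase.mpr ⟨fun hkj => hjk hkj.symm, Finset.mem_univ _⟩
      rw [Finset.sum_erase_eq_sub hk]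
    rw [hsum2]
  by_cases hcase : ∃ k, d k ≤ r k
  · obtain ⟨k, hk⟩ := hcase
    refine ⟨k, fun j hjk => ?_⟩
    have hcas := h k j (fun hkj => hjk hkj.symm)
    have hA := hAle k j hjk
    have hA0 : (0:ℝ) ≤ ‖A k j‖ := norm_nonneg _
    have := key k j hjk
    nlinarith [hr0 j, hr0 k, hd j, hd k]
  · push_neg at hcase
    refine ⟨⟨0, by omega⟩, fun j hjk => ?_⟩
    set k : Fin n := ⟨0, by omega⟩
    have hA0 : (0:ℝ) ≤ ‖A k j‖ := norm_nonneg _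
    have := key k j hjk
    nlinarith [hcase j, hcase k, hd j, hd k, hr0 j]
end

section
/- Let A, B, C, D be bounded operators forming a 2×2 block operator 𝔸 on X₁ × X₂, and suppose λ - A and λ - D are invertible. If ‖B(λ-D)⁻¹C(λ-A)⁻¹‖ < 1 or ‖C(λ-A)⁻¹B(λ-D)⁻¹‖ < 1, then λ - 𝔸 is invertible. Consequently σ(𝔸) ⊆ σ(A) ∪ σ(D) ∪ { λ : ‖B(λ-D)⁻¹C(λ-A)⁻¹‖ ≥ 1 and ‖C(λ-A)⁻¹B(λ-D)⁻¹‖ ≥ 1 }. -/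
open ContinuousLinearMap

section Blk

variable {Y₁ Y₂ Z₁ Z₂ W₁ W₂ : Type*}
  [NormedAddCommGroup Y₁] [NormedSpace ℂ Y₁] [NormedAddCommGroup Y₂] [NormedSpace ℂ Y₂]
  [NormedAddCommGroup Z₁] [NormedSpace ℂ Z₁] [NormedAddCommGroup Z₂] [NormedSpace ℂ Z₂]
  [NormedAddCommGroup W₁] [NormedSpace ℂ W₁] [NormedAddCommGroup W₂] [NormedSpace ℂ W₂]

/-- Block operator. -/
noncomputable def blk (P : Y₁ →L[ℂ] Z₁) (Q : Y₂ →L[ℂ] Z₁) (R : Y₁ →L[ℂ] Z₂) (S : Y₂ →L[ℂ] Z₂) :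
    (Y₁ × Y₂) →L[ℂ] (Z₁ × Z₂) :=
  (P.comp (ContinuousLinearMap.fst ℂ Y₁ Y₂) + Q.comp (ContinuousLinearMap.snd ℂ Y₁ Y₂)).prod
    (R.comp (ContinuousLinearMap.fst ℂ Y₁ Y₂) + S.comp (ContinuousLinearMap.snd ℂ Y₁ Y₂))

@[simp] lemma blk_apply (P : Y₁ →L[ℂ] Z₁) (Q : Y₂ →L[ℂ] Z₁) (R : Y₁ →L[ℂ] Z₂) (S : Y₂ →L[ℂ] Z₂)
    (x : Y₁) (y : Y₂) : blk P Q R S (x, y) = (P x + Q y, R x + S y) := rfl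

lemma blk_comp (P : Z₁ →L[ℂ] W₁) (Q : Z₂ →L[ℂ] W₁) (R : Z₁ →L[ℂ] W₂) (S : Z₂ →L[ℂ] W₂)
    (P' : Y₁ →L[ℂ] Z₁) (Q' : Y₂ →L[ℂ] Z₁) (R' : Y₁ →L[ℂ] Z₂) (S' : Y₂ →L[ℂ] Z₂) :
    (blk P Q R S) ∘L (blk P' Q' R' S') =
      blk (P ∘L P' + Q ∘L R') (P ∘L Q' + Q ∘L S') (R ∘L P' + S ∘L R') (R ∘L Q' + S ∘L S') := by
  apply ContinuousLinearMap.ext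
  rintro ⟨x, y⟩
  simp [Prod.ext_iff, map_add]
  constructor <;> abel

lemma blk_one : blk (1 : Y₁ →L[ℂ] Y₁) (0 : Y₂ →L[ℂ] Y₁) (0 : Y₁ →L[ℂ] Y₂) (1 : Y₂ →L[ℂ] Y₂)
    = 1 := by
  apply ContinuousLinearMap.ext
  rintro ⟨x, y⟩
  simp [Prod.ext_iff]

end Blk

section Aux

variable {Y₁ Y₂ : Type*}
  [NormedAddCommGroup Y₁] [NormedSpace ℂ Y₁] [CompleteSpace Y₁]
  [NormedAddCommGroup Y₂] [NormedSpace ℂ Y₂] [CompleteSpace Y₂]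

lemma aux_schur (S : Y₁ →L[ℂ] Y₁) (B : Y₂ →L[ℂ] Y₁) (C : Y₁ →L[ℂ] Y₂) (T : Y₂ →L[ℂ] Y₂)
    (S' : Y₁ →L[ℂ] Y₁) (hS1 : S ∘L S' = 1) (hS2 : S' ∘L S = 1)
    (T' : Y₂ →L[ℂ] Y₂) (hT1 : T ∘L T' = 1) (hT2 : T' ∘L T = 1)
    (hx : ‖B ∘L T' ∘L C ∘L S'‖ < 1) :
    IsUnit (blk S (-B) (-C) T) := by
  obtain ⟨w, hw⟩ := isUnit_one_sub_of_norm_lt_one hx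
  set x : Y₁ →L[ℂ] Y₁ := B ∘L T' ∘L C ∘L S' with hxdef
  set U : Y₁ →L[ℂ] Y₁ := S - B ∘L (T' ∘L C) with hU
  set U' : Y₁ →L[ℂ] Y₁ := S' ∘L (↑w⁻¹ : Y₁ →L[ℂ] Y₁) with hU'
  have hS1' : S * S' = 1 := hS1
  have hS2' : S' * S = 1 := hS2
  have hxS : x * S = B ∘L (T' ∘L C) := by
    show x ∘L S = _
    rw [hxdef, ContinuousLinearMap.comp_assoc, ContinuousLinearMap.comp_assoc,
      ContinuousLinearMap.comp_assoc, hS2, one_def, comp_id]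
  have hUfac : U = ((1 : Y₁ →L[ℂ] Y₁) - x) * S := by
    rw [hU, sub_mul, one_mul, hxS]
  have hU'mul : U' = S' * (↑w⁻¹ : Y₁ →L[ℂ] Y₁) := rfl
  have hU1 : U ∘L U' = 1 := by
    show U * U' = 1
    rw [hUfac, hU'mul, mul_assoc, ← mul_assoc S S', hS1', one_mul, ← hw, w.mul_inv]
  have hU2 : U' ∘L U = 1 := by
    show U' * U = 1
    rw [hUfac, hU'mul, mul_assoc, ← mul_assoc (↑w⁻¹ : Y₁ →L[ℂ] Y₁) ((1 : Y₁ →L[ℂ] Y₁) - x) S,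
      ← hw, w.inv_mul, one_mul, hS2']
  -- factorization
  have hfac : blk S (-B) (-C) T
      = (blk (1 : Y₁ →L[ℂ] Y₁) (-(B ∘L T')) 0 (1 : Y₂ →L[ℂ] Y₂)) ∘L
        ((blk U 0 0 (1 : Y₂ →L[ℂ] Y₂)) ∘L (blk (1 : Y₁ →L[ℂ] Y₁) 0 (-C) T)) := by
    rw [blk_comp, blk_comp]
    congr 1 <;>
      simp [hU, ContinuousLinearMap.comp_assoc, hT2, one_def, sub_comp, comp_sub,
        sub_eq_add_neg]
  rw [hfac]
  have h1 : IsUnit ((blk (1 : Y₁ →L[ℂ] Y₁) (-(B ∘L T')) 0 (1 : Y₂ →L[ℂ] Y₂))) := by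
    rw [isUnit_iff_exists]
    refine ⟨blk (1 : Y₁ →L[ℂ] Y₁) (B ∘L T') 0 (1 : Y₂ →L[ℂ] Y₂), ?_, ?_⟩ <;>
      · show _ ∘L _ = _
        rw [blk_comp, ← blk_one]
        congr 1 <;> simp [one_def]
  have h2 : IsUnit ((blk U (0 : Y₂ →L[ℂ] Y₁) (0 : Y₁ →L[ℂ] Y₂) (1 : Y₂ →L[ℂ] Y₂))) := by
    rw [isUnit_iff_exists]
    refine ⟨blk U' 0 0 (1 : Y₂ →L[ℂ] Y₂), ?_, ?_⟩ <;>
      · show _ ∘L _ = _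
        rw [blk_comp, ← blk_one]
        congr 1 <;> simp [hU1, hU2, one_def]
  have h3 : IsUnit ((blk (1 : Y₁ →L[ℂ] Y₁) (0 : Y₂ →L[ℂ] Y₁) (-C) T)) := by
    rw [isUnit_iff_exists]
    refine ⟨blk (1 : Y₁ →L[ℂ] Y₁) 0 (T' ∘L C) T', ?_, ?_⟩ <;>
      · show _ ∘L _ = _
        rw [blk_comp, ← blk_one]
        congr 1 <;>
          simp [← ContinuousLinearMap.comp_assoc, hT1, hT2, one_def]
  exact h1.mul (h2.mul h3)

end Aux

/-- Improved 2×2 Schur-set localization using both Schur complements: if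
`λ - A`, `λ - D` are invertible and `‖B(λ-D)⁻¹C(λ-A)⁻¹‖ < 1` or
`‖C(λ-A)⁻¹B(λ-D)⁻¹‖ < 1`, then `λ - 𝔸` is invertible. -/
theorem two_by_two_schur_set_localization_symmetric
    {X₁ X₂ : Type*} [NormedAddCommGroup X₁] [NormedSpace ℂ X₁] [CompleteSpace X₁]
    [NormedAddCommGroup X₂] [NormedSpace ℂ X₂] [CompleteSpace X₂]
    (A : X₁ →L[ℂ] X₁) (B : X₂ →L[ℂ] X₁) (C : X₁ →L[ℂ] X₂) (D : X₂ →L[ℂ] X₂)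
    (𝔸 : (X₁ × X₂) →L[ℂ] (X₁ × X₂))
    (h𝔸 : ∀ x y, 𝔸 (x, y) = (A x + B y, C x + D y))
    (lam : ℂ)
    (A' : X₁ →L[ℂ] X₁)
    (hA1 : (lam • (1 : X₁ →L[ℂ] X₁) - A) ∘L A' = 1)
    (hA2 : A' ∘L (lam • (1 : X₁ →L[ℂ] X₁) - A) = 1)
    (D' : X₂ →L[ℂ] X₂)
    (hD1 : (lam • (1 : X₂ →L[ℂ] X₂) - D) ∘L D' = 1)
    (hD2 : D' ∘L (lam • (1 : X₂ →L[ℂ] X₂) - D) = 1)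
    (hnorm : ‖B ∘L D' ∘L C ∘L A'‖ < 1 ∨ ‖C ∘L A' ∘L B ∘L D'‖ < 1) :
    IsUnit (lam • (1 : (X₁ × X₂) →L[ℂ] (X₁ × X₂)) - 𝔸) := by
  set S : X₁ →L[ℂ] X₁ := lam • (1 : X₁ →L[ℂ] X₁) - A with hS
  set T : X₂ →L[ℂ] X₂ := lam • (1 : X₂ →L[ℂ] X₂) - D with hT
  have hM : lam • (1 : (X₁ × X₂) →L[ℂ] (X₁ × X₂)) - 𝔸 = blk S (-B) (-C) T := by
    apply ContinuousLinearMap.ext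
    rintro ⟨x, y⟩
    simp [Prod.ext_iff, h𝔸, hS, hT, Prod.smul_def, sub_eq_add_neg]
    constructor <;> abel
  rw [hM]
  rcases hnorm with h | h
  · exact aux_schur S B C T A' hA1 hA2 D' hD1 hD2 h
  · have hu := aux_schur T C B S D' hD1 hD2 A' hA1 hA2 h
    obtain ⟨v, hv⟩ := hu
    set e : (X₁ × X₂) ≃L[ℂ] (X₂ × X₁) := ContinuousLinearEquiv.prodComm ℂ X₁ X₂ with he
    have hconj : blk S (-B) (-C) T
        = (e.symm : (X₂ × X₁) →L[ℂ] (X₁ × X₂)) ∘L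
            ((blk T (-C) (-B) S) ∘L (e : (X₁ × X₂) →L[ℂ] (X₂ × X₁))) := by
      apply ContinuousLinearMap.ext
      rintro ⟨x, y⟩
      simp [Prod.ext_iff, he]
      constructor <;> abel
    rw [hconj, isUnit_iff_exists]
    have hv1 : (blk T (-C) (-B) S) ∘L (↑v⁻¹ : (X₂ × X₁) →L[ℂ] (X₂ × X₁)) = 1 := by
      rw [← hv]; exact v.mul_inv
    have hv2 : (↑v⁻¹ : (X₂ × X₁) →L[ℂ] (X₂ × X₁)) ∘L (blk T (-C) (-B) S) = 1 := by
      rw [← hv]; exact v.inv_mul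
    refine ⟨(e.symm : (X₂ × X₁) →L[ℂ] (X₁ × X₂)) ∘L
        ((↑v⁻¹ : (X₂ × X₁) →L[ℂ] (X₂ × X₁)) ∘L (e : (X₁ × X₂) →L[ℂ] (X₂ × X₁))), ?_, ?_⟩
    · show _ ∘L _ = _
      simp only [ContinuousLinearMap.comp_assoc]
      rw [← ContinuousLinearMap.comp_assoc (e : (X₁ × X₂) →L[ℂ] (X₂ × X₁))
        (e.symm : (X₂ × X₁) →L[ℂ] (X₁ × X₂)), e.coe_comp_coe_symm]
      rw [id_comp, ← ContinuousLinearMap.comp_assoc (blk T (-C) (-B) S)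
        (↑v⁻¹ : (X₂ × X₁) →L[ℂ] (X₂ × X₁)), hv1, one_def, id_comp, e.coe_symm_comp_coe]
      rfl
    · show _ ∘L _ = _
      simp only [ContinuousLinearMap.comp_assoc]
      rw [← ContinuousLinearMap.comp_assoc (e : (X₁ × X₂) →L[ℂ] (X₂ × X₁))
        (e.symm : (X₂ × X₁) →L[ℂ] (X₁ × X₂)), e.coe_comp_coe_symm]
      rw [id_comp, ← ContinuousLinearMap.comp_assoc
        (↑v⁻¹ : (X₂ × X₁) →L[ℂ] (X₂ × X₁)) (blk T (-C) (-B) S), hv2, one_def, id_comp,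
        e.coe_symm_comp_coe]
      rfl
end

section
/- Let 𝔸 be an n×n block matrix of bounded operators A i j : Xⱼ → Xᵢ on the product space X with the 1-norm, and let λ ∈ ℂ be such that λ - A i i is invertible for all i. If for every j ≠ n, Σ_{i ≠ n} ‖(A i n (λ - A n n)⁻¹ A n j + (if i ≠ j then A i j else 0)) (λ - A j j)⁻¹‖ < 1, then λ - 𝔸 is invertible with bounded inverse. -/
open Finset
set_option synthInstance.maxHeartbeats 1000000
set_option maxHeartbeats 1000000

namespace BlockSchurAux

variable {n : ℕ} {X : Fin (n + 1) → Type*} [∀ i, NormedAddCommGroup (X i)]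
  [∀ i, NormedSpace ℂ (X i)]

noncomputable def incl (i : Fin (n + 1)) : X i →L[ℂ] PiLp 1 X :=
  (PiLp.continuousLinearEquiv 1 ℂ X).symm.toContinuousLinearMap.comp
    ⟨LinearMap.single ℂ X i, continuous_single i⟩

noncomputable def proj (j : Fin (n + 1)) : PiLp 1 X →L[ℂ] X j :=
  (ContinuousLinearMap.proj j).comp (PiLp.continuousLinearEquiv 1 ℂ X).toContinuousLinearMap

@[simp] lemma incl_apply (i k : Fin (n + 1)) (v : X i) :
    (incl i v : PiLp 1 X) k = Pi.single i v k := rfl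

@[simp] lemma proj_apply (j : Fin (n + 1)) (x : PiLp 1 X) : proj j x = x j := rfl

lemma norm_incl_apply (i : Fin (n + 1)) (v : X i) : ‖(incl i v : PiLp 1 X)‖ = ‖v‖ := by
  show ‖WithLp.toLp 1 (Pi.single i v)‖ = ‖v‖
  rw [PiLp.norm_toLp_single]

@[simp] lemma padd (x y : PiLp 1 X) (k) : (x + y) k = x k + y k := rfl
@[simp] lemma psub (x y : PiLp 1 X) (k) : (x - y) k = x k - y k := rfl
@[simp] lemma psmul (c : ℂ) (x : PiLp 1 X) (k) : (c • x) k = c • x k := rfl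
@[simp] lemma pzero (k : Fin (n + 1)) : (0 : PiLp 1 X) k = 0 := rfl

lemma psum_apply {α} (s : Finset α) (v : α → PiLp 1 X) (k : Fin (n + 1)) :
    (∑ i ∈ s, v i) k = ∑ i ∈ s, v i k :=
  by rw [WithLp.ofLp_sum, Finset.sum_apply]

variable (A : ∀ i j, X j →L[ℂ] X i) (lam : ℂ) (R : ∀ i, X i →L[ℂ] X i)

noncomputable def Dop : PiLp 1 X →L[ℂ] PiLp 1 X :=
  ∑ i, (incl i).comp (((lam • (1 : X i →L[ℂ] X i)) - A i i).comp (proj i))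

noncomputable def Rop : PiLp 1 X →L[ℂ] PiLp 1 X :=
  ∑ i, (incl i).comp ((R i).comp (proj i))

noncomputable def Cop : PiLp 1 X →L[ℂ] PiLp 1 X :=
  ∑ i ∈ univ.erase (Fin.last n),
    (incl i).comp ((A i (Fin.last n) ∘L R (Fin.last n)).comp (proj (Fin.last n)))

noncomputable def Eop : PiLp 1 X →L[ℂ] PiLp 1 X :=
  ∑ j ∈ univ.erase (Fin.last n),
    (incl (Fin.last n)).comp ((R (Fin.last n) ∘L A (Fin.last n) j).comp (proj j))

noncomputable def Nop : PiLp 1 X →L[ℂ] PiLp 1 X :=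
  ∑ j ∈ univ.erase (Fin.last n), ∑ i ∈ univ.erase (Fin.last n),
    (incl i).comp
      (((A i (Fin.last n) ∘L R (Fin.last n) ∘L A (Fin.last n) j +
          (if i ≠ j then A i j else 0)) ∘L R j).comp (proj j))

lemma Dop_apply (x : PiLp 1 X) (k) :
    Dop A lam x k = lam • x k - A k k (x k) := by
  simp only [Dop, ContinuousLinearMap.sum_apply, ContinuousLinearMap.comp_apply, proj_apply,
    psum_apply]
  rw [Finset.sum_eq_single_of_mem k (mem_univ k)]
  · simp
  · intro i _ hik
    simp [incl_apply, Pi.single_eq_of_ne hik.symm]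

lemma Rop_apply (x : PiLp 1 X) (k) : Rop R x k = R k (x k) := by
  simp only [Rop, ContinuousLinearMap.sum_apply, ContinuousLinearMap.comp_apply, proj_apply,
    psum_apply]
  rw [Finset.sum_eq_single_of_mem k (mem_univ k)]
  · simp
  · intro i _ hik
    simp [incl_apply, Pi.single_eq_of_ne hik.symm]

lemma Cop_apply_last (x : PiLp 1 X) : Cop A R x (Fin.last n) = 0 := by
  simp only [Cop, ContinuousLinearMap.sum_apply, ContinuousLinearMap.comp_apply, proj_apply,
    psum_apply]
  refine Finset.sum_eq_zero fun i hi => ?_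
  simp [incl_apply, Pi.single_eq_of_ne ((mem_erase.1 hi).1).symm]

lemma Cop_apply_ne (x : PiLp 1 X) {k} (hk : k ≠ Fin.last n) :
    Cop A R x k = A k (Fin.last n) (R (Fin.last n) (x (Fin.last n))) := by
  simp only [Cop, ContinuousLinearMap.sum_apply, ContinuousLinearMap.comp_apply, proj_apply,
    psum_apply]
  rw [Finset.sum_eq_single_of_mem k (mem_erase.2 ⟨hk, mem_univ k⟩)]
  · simp
  · intro i _ hik
    simp [incl_apply, Pi.single_eq_of_ne hik.symm]

lemma Eop_apply_ne (x : PiLp 1 X) {k} (hk : k ≠ Fin.last n) : Eop A R x k = 0 := by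
  simp only [Eop, ContinuousLinearMap.sum_apply, ContinuousLinearMap.comp_apply, proj_apply,
    psum_apply]
  refine Finset.sum_eq_zero fun j hj => ?_
  simp [incl_apply, Pi.single_eq_of_ne hk]

lemma Eop_apply_last (x : PiLp 1 X) :
    Eop A R x (Fin.last n) =
      ∑ j ∈ univ.erase (Fin.last n), R (Fin.last n) (A (Fin.last n) j (x j)) := by
  simp only [Eop, ContinuousLinearMap.sum_apply, ContinuousLinearMap.comp_apply, proj_apply,
    psum_apply]
  refine Finset.sum_congr rfl fun j hj => ?_
  simp

lemma Nop_apply_last (x : PiLp 1 X) : Nop A R x (Fin.last n) = 0 := by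
  simp only [Nop, ContinuousLinearMap.sum_apply, ContinuousLinearMap.comp_apply, proj_apply,
    psum_apply]
  refine Finset.sum_eq_zero fun j hj => Finset.sum_eq_zero fun i hi => ?_
  simp [incl_apply, Pi.single_eq_of_ne ((mem_erase.1 hi).1).symm]

lemma Nop_apply_ne (x : PiLp 1 X) {k} (hk : k ≠ Fin.last n) :
    Nop A R x k = ∑ j ∈ univ.erase (Fin.last n),
      (A k (Fin.last n) (R (Fin.last n) (A (Fin.last n) j (R j (x j)))) +
        (if k ≠ j then A k j (R j (x j)) else 0)) := by
  simp only [Nop, ContinuousLinearMap.sum_apply, ContinuousLinearMap.comp_apply, proj_apply,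
    psum_apply]
  refine Finset.sum_congr rfl fun j hj => ?_
  rw [Finset.sum_eq_single_of_mem k (mem_erase.2 ⟨hk, mem_univ k⟩)]
  · by_cases hkj : k = j <;>
      simp [hkj, ContinuousLinearMap.add_apply, ContinuousLinearMap.comp_apply]
  · intro i _ hik
    simp [incl_apply, Pi.single_eq_of_ne hik.symm]


lemma hinv1 (hR1 : ∀ i, (lam • (1 : X i →L[ℂ] X i) - A i i) ∘L R i = 1) (i) (v : X i) :
    lam • R i v - A i i (R i v) = v := by
  have := ContinuousLinearMap.ext_iff.mp (hR1 i) v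
  simpa using this

lemma hinv2 (hR2 : ∀ i, R i ∘L (lam • (1 : X i →L[ℂ] X i) - A i i) = 1) (i) (v : X i) :
    R i (lam • v - A i i v) = v := by
  have := ContinuousLinearMap.ext_iff.mp (hR2 i) v
  simpa using this

lemma Cop_sq : Cop A R * Cop A R = 0 := by
  refine ContinuousLinearMap.ext fun x => (WithLp.ext_iff _).2 (funext fun k => ?_)
  rcases eq_or_ne k (Fin.last n) with rfl | hk
  · simp [ContinuousLinearMap.mul_apply, Cop_apply_last]
  · simp [ContinuousLinearMap.mul_apply, Cop_apply_ne _ _ _ hk, Cop_apply_last]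

lemma Eop_sq : Eop A R * Eop A R = 0 := by
  refine ContinuousLinearMap.ext fun x => (WithLp.ext_iff _).2 (funext fun k => ?_)
  rcases eq_or_ne k (Fin.last n) with rfl | hk
  · rw [ContinuousLinearMap.mul_apply, Eop_apply_last]
    refine (Finset.sum_eq_zero fun j hj => ?_).trans rfl
    rw [Eop_apply_ne A R x (mem_erase.1 hj).1]
    simp
  · simp [ContinuousLinearMap.mul_apply, Eop_apply_ne _ _ _ hk]

lemma unit_one_sub_Cop : IsUnit (1 - Cop A R) := by
  refine ⟨⟨1 - Cop A R, 1 + Cop A R, ?_, ?_⟩, rfl⟩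
  · have : (1 - Cop A R) * (1 + Cop A R) = 1 - Cop A R * Cop A R := by
      rw [mul_one_add, one_sub_mul]; abel
    rw [this, Cop_sq, sub_zero]
  · have : (1 + Cop A R) * (1 - Cop A R) = 1 - Cop A R * Cop A R := by
      rw [one_add_mul, mul_one_sub]; abel
    rw [this, Cop_sq, sub_zero]

lemma unit_one_add_Eop : IsUnit (1 + Eop A R) := by
  refine ⟨⟨1 + Eop A R, 1 - Eop A R, ?_, ?_⟩, rfl⟩
  · have : (1 + Eop A R) * (1 - Eop A R) = 1 - Eop A R * Eop A R := by
      rw [one_add_mul, mul_one_sub]; abel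
    rw [this, Eop_sq, sub_zero]
  · have : (1 - Eop A R) * (1 + Eop A R) = 1 - Eop A R * Eop A R := by
      rw [mul_one_add, one_sub_mul]; abel
    rw [this, Eop_sq, sub_zero]

lemma unit_Dop (hR1 : ∀ i, (lam • (1 : X i →L[ℂ] X i) - A i i) ∘L R i = 1)
    (hR2 : ∀ i, R i ∘L (lam • (1 : X i →L[ℂ] X i) - A i i) = 1) :
    IsUnit (Dop A lam (X := X)) := by
  refine ⟨⟨Dop A lam, Rop R, ?_, ?_⟩, rfl⟩
  · refine ContinuousLinearMap.ext fun x => (WithLp.ext_iff _).2 (funext fun k => ?_)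
    rw [ContinuousLinearMap.mul_apply, Dop_apply, Rop_apply, ContinuousLinearMap.one_apply]
    exact hinv1 A lam R hR1 k (x k)
  · refine ContinuousLinearMap.ext fun x => (WithLp.ext_iff _).2 (funext fun k => ?_)
    rw [ContinuousLinearMap.mul_apply, Rop_apply, Dop_apply, ContinuousLinearMap.one_apply]
    exact hinv2 A lam R hR2 k (x k)

lemma key (𝔸 : PiLp 1 X →L[ℂ] PiLp 1 X)
    (h𝔸 : ∀ (x : PiLp 1 X) (i : Fin (n + 1)), 𝔸 x i = ∑ j, A i j (x j))
    (hR1 : ∀ i, (lam • (1 : X i →L[ℂ] X i) - A i i) ∘L R i = 1)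
    (hR2 : ∀ i, R i ∘L (lam • (1 : X i →L[ℂ] X i) - A i i) = 1) :
    (lam • (1 : PiLp 1 X →L[ℂ] PiLp 1 X) - 𝔸) * (1 + Eop A R)
      = (1 - Cop A R) * ((1 - Nop A R) * Dop A lam) := by
  refine ContinuousLinearMap.ext fun x => (WithLp.ext_iff _).2 (funext fun k => ?_)
  set y := x + Eop A R x with hy
  set z := Dop A lam x with hz
  set w := z - Nop A R z with hw
  have hyne : ∀ j, j ≠ (Fin.last n) → y j = x j := by
    intro j hj
    rw [hy, padd, Eop_apply_ne A R x hj, add_zero]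
  have hyp : y (Fin.last n) = x (Fin.last n) + ∑ j ∈ (univ.erase (Fin.last n)), R (Fin.last n) (A (Fin.last n) j (x j)) := by
    rw [hy, padd, Eop_apply_last]
  have hsum : ∀ i, ∑ j, A i j (y j) = A i (Fin.last n) (y (Fin.last n)) + ∑ j ∈ (univ.erase (Fin.last n)), A i j (x j) := by
    intro i
    rw [← Finset.add_sum_erase _ (fun j => A i j (y j)) (mem_univ (Fin.last n))]
    congr 1
    exact Finset.sum_congr rfl fun j hj => by rw [hyne j (mem_erase.1 hj).1]
  have hLHS : ((lam • (1 : PiLp 1 X →L[ℂ] PiLp 1 X) - 𝔸) * (1 + Eop A R)) x k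
      = lam • y k - (A k (Fin.last n) (y (Fin.last n)) + ∑ j ∈ (univ.erase (Fin.last n)), A k j (x j)) := by
    rw [ContinuousLinearMap.mul_apply, ContinuousLinearMap.add_apply,
      ContinuousLinearMap.one_apply, ContinuousLinearMap.sub_apply,
      ContinuousLinearMap.smul_apply, ContinuousLinearMap.one_apply, ← hy, psub, psmul,
      h𝔸 y k, hsum k]
  have hzj : ∀ j, R j (z j) = x j := by
    intro j
    rw [hz, Dop_apply]
    exact hinv2 A lam R hR2 j (x j)
  have hwp : w (Fin.last n) = z (Fin.last n) := by rw [hw, psub, Nop_apply_last, sub_zero]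
  rcases eq_or_ne k (Fin.last n) with rfl | hk
  · -- pivot row
    have hRHS : ((1 - Cop A R) * ((1 - Nop A R) * Dop A lam)) x (Fin.last n) = z (Fin.last n) := by
      rw [ContinuousLinearMap.mul_apply, ContinuousLinearMap.mul_apply,
        ContinuousLinearMap.sub_apply, ContinuousLinearMap.one_apply, ← hz,
        ContinuousLinearMap.sub_apply, ContinuousLinearMap.one_apply, ← hw, psub,
        Cop_apply_last, sub_zero, hwp]
    rw [hLHS, hRHS, hz, Dop_apply, hyp]
    rw [smul_add, map_add, Finset.smul_sum, map_sum]
    have hterm : ∑ j ∈ (univ.erase (Fin.last n)), lam • R (Fin.last n) (A (Fin.last n) j (x j))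
        = ∑ j ∈ (univ.erase (Fin.last n)), (A (Fin.last n) j (x j)
            + A (Fin.last n) (Fin.last n) (R (Fin.last n) (A (Fin.last n) j (x j)))) :=
      Finset.sum_congr rfl fun j hj =>
        eq_add_of_sub_eq (hinv1 A lam R hR1 (Fin.last n) (A (Fin.last n) j (x j)))
    rw [hterm, Finset.sum_add_distrib]
    abel
  · -- non-pivot row
    have hks : k ∈ (univ.erase (Fin.last n)) := mem_erase.2 ⟨hk, mem_univ k⟩
    have hRHS : ((1 - Cop A R) * ((1 - Nop A R) * Dop A lam)) x k
        = (lam • x k - A k k (x k))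
          - ∑ j ∈ (univ.erase (Fin.last n)), (A k (Fin.last n) (R (Fin.last n) (A (Fin.last n) j (x j))) + (if k ≠ j then A k j (x j) else 0))
          - A k (Fin.last n) (x (Fin.last n)) := by
      rw [ContinuousLinearMap.mul_apply, ContinuousLinearMap.mul_apply,
        ContinuousLinearMap.sub_apply, ContinuousLinearMap.one_apply, ← hz,
        ContinuousLinearMap.sub_apply, ContinuousLinearMap.one_apply, ← hw, psub,
        Cop_apply_ne _ _ _ hk, hwp, hw, psub, Nop_apply_ne _ _ _ hk, hz, Dop_apply,
        Dop_apply, hinv2 A lam R hR2 (Fin.last n) (x (Fin.last n))]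
      rw [← hz]
      congr 2
      refine Finset.sum_congr rfl fun j hj => ?_
      rw [hzj j]
    rw [hLHS, hRHS, hyne k hk, hyp, map_add, map_sum]
    rw [Finset.sum_add_distrib]
    have hsplit : ∑ j ∈ (univ.erase (Fin.last n)), A k j (x j)
        = A k k (x k) + ∑ j ∈ (univ.erase (Fin.last n)), (if k ≠ j then A k j (x j) else 0) := by
      rw [← Finset.add_sum_erase _ (fun j => A k j (x j)) hks,
        ← Finset.add_sum_erase _ (fun j => if k ≠ j then A k j (x j) else 0) hks]
      simp only [ne_eq, not_true_eq_false, if_false, zero_add]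
      congr 1
      refine Finset.sum_congr rfl fun j hj => ?_
      rw [if_pos (Ne.symm (mem_erase.1 hj).1)]
    rw [hsplit]
    abel


instance piLpComplete [∀ i, CompleteSpace (X i)] : CompleteSpace (PiLp 1 X) :=
  inferInstance

lemma unit_one_sub_Nop [∀ i, CompleteSpace (X i)]
    (hschur : ∀ j, j ≠ Fin.last n →
      ∑ i ∈ Finset.univ.erase (Fin.last n),
        ‖(A i (Fin.last n) ∘L R (Fin.last n) ∘L A (Fin.last n) j +
            (if i ≠ j then A i j else 0)) ∘L R j‖ < 1) :
    IsUnit (1 - Nop A R) := by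
  rcases Finset.eq_empty_or_nonempty (univ.erase (Fin.last n) : Finset (Fin (n + 1)))
    with he | hne
  · have : Nop A R (X := X) = 0 := by rw [Nop, he, Finset.sum_empty]
    rw [this, sub_zero]
    exact isUnit_one
  · set colsum : Fin (n + 1) → ℝ := fun j => ∑ i ∈ univ.erase (Fin.last n),
      ‖(A i (Fin.last n) ∘L R (Fin.last n) ∘L A (Fin.last n) j +
          (if i ≠ j then A i j else 0)) ∘L R j‖ with hcol
    have hc1 : (univ.erase (Fin.last n)).sup' hne colsum < 1 :=
      (Finset.sup'_lt_iff hne).2 fun j hj => hschur j (mem_erase.1 hj).1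
    have hc0 : 0 ≤ (univ.erase (Fin.last n)).sup' hne colsum := by
      obtain ⟨j0, hj0⟩ := hne
      exact le_trans (Finset.sum_nonneg fun i _ => norm_nonneg _) (Finset.le_sup' colsum hj0)
    have hbound : ‖Nop A R (X := X)‖ ≤ (univ.erase (Fin.last n)).sup' hne colsum := by
      refine ContinuousLinearMap.opNorm_le_bound _ hc0 fun x => ?_
      have h1 : Nop A R x = ∑ j ∈ univ.erase (Fin.last n), ∑ i ∈ univ.erase (Fin.last n),
          incl i (((A i (Fin.last n) ∘L R (Fin.last n) ∘L A (Fin.last n) j +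
            (if i ≠ j then A i j else 0)) ∘L R j) (x j)) := by
        simp [Nop, ContinuousLinearMap.sum_apply, ContinuousLinearMap.comp_apply]
      have step1 : ‖Nop A R x‖ ≤ ∑ j ∈ univ.erase (Fin.last n), ∑ i ∈ univ.erase (Fin.last n),
          ‖((A i (Fin.last n) ∘L R (Fin.last n) ∘L A (Fin.last n) j +
            (if i ≠ j then A i j else 0)) ∘L R j) (x j)‖ := by
        rw [h1]
        refine (norm_sum_le _ _).trans (Finset.sum_le_sum fun j _ => ?_)
        refine (norm_sum_le _ _).trans (Finset.sum_le_sum fun i _ => ?_)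
        rw [norm_incl_apply]
      have step2 : ∀ j ∈ univ.erase (Fin.last n), ∑ i ∈ univ.erase (Fin.last n),
          ‖((A i (Fin.last n) ∘L R (Fin.last n) ∘L A (Fin.last n) j +
            (if i ≠ j then A i j else 0)) ∘L R j) (x j)‖
          ≤ (univ.erase (Fin.last n)).sup' hne colsum * ‖x j‖ := by
        intro j hj
        calc ∑ i ∈ univ.erase (Fin.last n),
            ‖((A i (Fin.last n) ∘L R (Fin.last n) ∘L A (Fin.last n) j +
              (if i ≠ j then A i j else 0)) ∘L R j) (x j)‖
            ≤ ∑ i ∈ univ.erase (Fin.last n),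
              ‖(A i (Fin.last n) ∘L R (Fin.last n) ∘L A (Fin.last n) j +
                (if i ≠ j then A i j else 0)) ∘L R j‖ * ‖x j‖ :=
              Finset.sum_le_sum fun i _ => ContinuousLinearMap.le_opNorm _ _
          _ = colsum j * ‖x j‖ := by rw [hcol, ← Finset.sum_mul]
          _ ≤ (univ.erase (Fin.last n)).sup' hne colsum * ‖x j‖ :=
              mul_le_mul_of_nonneg_right (Finset.le_sup' colsum hj) (norm_nonneg _)
      have hx : ∑ j ∈ univ.erase (Fin.last n), ‖x j‖ ≤ ‖x‖ := by
        have hnx : ‖x‖ = ∑ j, ‖x j‖ := by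
          rw [PiLp.norm_eq_sum (by norm_num : 0 < (1 : ENNReal).toReal)]
          simp
        rw [hnx]
        exact Finset.sum_le_sum_of_subset_of_nonneg (Finset.erase_subset _ _)
          fun _ _ _ => norm_nonneg _
      calc ‖Nop A R x‖ ≤ ∑ j ∈ univ.erase (Fin.last n),
            (univ.erase (Fin.last n)).sup' hne colsum * ‖x j‖ :=
          step1.trans (Finset.sum_le_sum step2)
        _ = (univ.erase (Fin.last n)).sup' hne colsum
            * ∑ j ∈ univ.erase (Fin.last n), ‖x j‖ := by rw [Finset.mul_sum]
        _ ≤ _ * ‖x‖ := mul_le_mul_of_nonneg_left hx hc0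
    exact (Units.oneSub (Nop A R) (lt_of_le_of_lt hbound hc1)).isUnit

end BlockSchurAux

/-- Schur-set localization for an `(n+1) × (n+1)` block matrix of bounded operators
(pivot = last index): if each `λ - A i i` is boundedly invertible and the Schur
quantities `𝓡_{n j}(λ)` are all `< 1`, then `λ - 𝔸` is boundedly invertible on the
product space with the 1-norm. -/
theorem block_schur_set_localization
    {n : ℕ} (X : Fin (n + 1) → Type*) [∀ i, NormedAddCommGroup (X i)]
    [∀ i, NormedSpace ℂ (X i)] [∀ i, CompleteSpace (X i)]
    (A : ∀ i j, X j →L[ℂ] X i)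
    (𝔸 : PiLp 1 X →L[ℂ] PiLp 1 X)
    (h𝔸 : ∀ (x : PiLp 1 X) (i : Fin (n + 1)), 𝔸 x i = ∑ j, A i j (x j))
    (lam : ℂ)
    (R : ∀ i, X i →L[ℂ] X i)
    (hR1 : ∀ i, (lam • (1 : X i →L[ℂ] X i) - A i i) ∘L R i = 1)
    (hR2 : ∀ i, R i ∘L (lam • (1 : X i →L[ℂ] X i) - A i i) = 1)
    (hschur : ∀ j, j ≠ Fin.last n →
      ∑ i ∈ Finset.univ.erase (Fin.last n),
        ‖(A i (Fin.last n) ∘L R (Fin.last n) ∘L A (Fin.last n) j +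
            (if i ≠ j then A i j else 0)) ∘L R j‖ < 1) :
    IsUnit (lam • (1 : PiLp 1 X →L[ℂ] PiLp 1 X) - 𝔸) := by
  have hkey := BlockSchurAux.key A lam R 𝔸 h𝔸 hR1 hR2
  have hC := BlockSchurAux.unit_one_sub_Cop A R
  have hN := BlockSchurAux.unit_one_sub_Nop A R hschur
  have hD := BlockSchurAux.unit_Dop A lam R hR1 hR2
  have hE := BlockSchurAux.unit_one_add_Eop A R
  obtain ⟨u, hu⟩ := hE
  have hS : (lam • (1 : PiLp 1 X →L[ℂ] PiLp 1 X) - 𝔸)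
      = ((1 - BlockSchurAux.Cop A R) * ((1 - BlockSchurAux.Nop A R)
          * BlockSchurAux.Dop A lam)) * ↑u⁻¹ := by
    calc (lam • (1 : PiLp 1 X →L[ℂ] PiLp 1 X) - 𝔸)
        = (lam • (1 : PiLp 1 X →L[ℂ] PiLp 1 X) - 𝔸) * (↑u * ↑u⁻¹) := by
          rw [Units.mul_inv, mul_one]
      _ = ((lam • (1 : PiLp 1 X →L[ℂ] PiLp 1 X) - 𝔸) * ↑u) * ↑u⁻¹ := by
          rw [mul_assoc]
      _ = _ := by rw [hu, hkey]
  rw [hS]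
  exact (hC.mul (hN.mul hD)).mul (Units.isUnit _)
end
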